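/- A simple involution avoids 2341 if and only if either it equals the permutation 5274163 or it avoids 123. Equivalently, the set of simple 2341-avoiding involutions consists exactly of the permutation 5274163 together with the simple involutions avoiding 123. -/

import Mathlib

/-- `π` contains the pattern `σ`. -/
def Contains {n k : ℕ} (π : Equiv.Perm (Fin n)) (σ : Equiv.Perm (Fin k)) : Prop :=
  ∃ f : Fin k → Fin n, StrictMono f ∧ ∀ i j : Fin k, σ i < σ j ↔ π (f i) < π (f j)

def IsInvolution {n : ℕ} (π : Equiv.Perm (Fin n)) : Prop := π⁻¹ = π

/-- direct sum of permutations -/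
def directSum {m n : ℕ} (σ : Equiv.Perm (Fin m)) (τ : Equiv.Perm (Fin n)) :
    Equiv.Perm (Fin (m + n)) :=
  finSumFinEquiv.symm.trans ((Equiv.sumCongr σ τ).trans finSumFinEquiv)

/-- skew sum of permutations -/
def skewSum {m n : ℕ} (σ : Equiv.Perm (Fin m)) (τ : Equiv.Perm (Fin n)) :
    Equiv.Perm (Fin (m + n)) :=
  finSumFinEquiv.symm.trans ((Equiv.sumCongr σ τ).trans
    ((Equiv.sumComm (Fin m) (Fin n)).trans (finSumFinEquiv.trans (finCongr (Nat.add_comm n m)))))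

def SumDecomposable {n : ℕ} (π : Equiv.Perm (Fin n)) : Prop :=
  ∃ (a b : ℕ) (h : a + b = n), 0 < a ∧ 0 < b ∧
    ∃ (σ : Equiv.Perm (Fin a)) (τ : Equiv.Perm (Fin b)),
      π = (finCongr h).permCongr (directSum σ τ)

def SkewDecomposable {n : ℕ} (π : Equiv.Perm (Fin n)) : Prop :=
  ∃ (a b : ℕ) (h : a + b = n), 0 < a ∧ 0 < b ∧
    ∃ (σ : Equiv.Perm (Fin a)) (τ : Equiv.Perm (Fin b)),
      π = (finCongr h).permCongr (skewSum σ τ)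

/-- a set of contiguous indices/values -/
def SetContiguous {n : ℕ} (S : Set (Fin n)) : Prop :=
  ∀ ⦃i j k : Fin n⦄, i ∈ S → j ∈ S → i ≤ k → k ≤ j → k ∈ S

/-- an interval of the permutation `π` -/
def IsPermInterval {n : ℕ} (π : Equiv.Perm (Fin n)) (S : Set (Fin n)) : Prop :=
  SetContiguous S ∧ SetContiguous (π '' S)

/-- A permutation of length at least 2 is simple if all its intervals are trivial. -/
def IsSimple {n : ℕ} (π : Equiv.Perm (Fin n)) : Prop :=
  2 ≤ n ∧ ∀ S : Set (Fin n), IsPermInterval π S → S.ncard ≤ 1 ∨ S = Set.univ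

-- patterns (0-indexed one-line notation)
noncomputable def p123 : Equiv.Perm (Fin 3) := Equiv.ofBijective ![0, 1, 2] (by decide)
noncomputable def p132 : Equiv.Perm (Fin 3) := Equiv.ofBijective ![0, 2, 1] (by decide)
noncomputable def p213 : Equiv.Perm (Fin 3) := Equiv.ofBijective ![1, 0, 2] (by decide)
noncomputable def p1324 : Equiv.Perm (Fin 4) := Equiv.ofBijective ![0, 2, 1, 3] (by decide)
noncomputable def p1234 : Equiv.Perm (Fin 4) := Equiv.ofBijective ![0, 1, 2, 3] (by decide)
noncomputable def p1342 : Equiv.Perm (Fin 4) := Equiv.ofBijective ![0, 2, 3, 1] (by decide)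
noncomputable def p1423 : Equiv.Perm (Fin 4) := Equiv.ofBijective ![0, 3, 1, 2] (by decide)
noncomputable def p2341 : Equiv.Perm (Fin 4) := Equiv.ofBijective ![1, 2, 3, 0] (by decide)
noncomputable def p2413 : Equiv.Perm (Fin 4) := Equiv.ofBijective ![1, 3, 0, 2] (by decide)
noncomputable def p5274163 : Equiv.Perm (Fin 7) := Equiv.ofBijective ![4, 1, 6, 3, 0, 5, 2] (by decide)

-- the order-respecting equivalence between a lexicographic sigma of Fins and a Fin
noncomputable def finSigmaOrderEquiv {m : ℕ} (k : Fin m → ℕ) :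
    (Σₗ i : Fin m, Fin (k i)) ≃o Fin (∑ i, k i) :=
  (monoEquivOfFin (Σₗ i : Fin m, Fin (k i)) (by
    rw [Fintype.card_congr (ofLex : _ ≃ (Σ i : Fin m, Fin (k i)))]
    simp)).symm

/-- the inflation `σ[α 0, …, α (m-1)]` -/
noncomputable def inflation {m : ℕ} (σ : Equiv.Perm (Fin m)) (k : Fin m → ℕ)
    (α : ∀ i, Equiv.Perm (Fin (k i))) : Equiv.Perm (Fin (∑ i, k i)) :=
  ((finSigmaOrderEquiv k).toEquiv.symm.trans
    ((ofLex : (Σₗ i : Fin m, Fin (k i)) ≃ (Σ i : Fin m, Fin (k i))).trans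
      ((Equiv.sigmaCongr σ fun i =>
          (α i).trans (finCongr (congrArg k (σ.symm_apply_apply i).symm))).trans
        ((toLex : (Σ t : Fin m, Fin (k (σ.symm t))) ≃ (Σₗ t : Fin m, Fin (k (σ.symm t)))).trans
          ((finSigmaOrderEquiv fun t => k (σ.symm t)).toEquiv.trans
            (finCongr (Equiv.sum_comp σ.symm k)))))))

section AuxiliaryLemmas

variable {n : ℕ}

lemma fin4_cases (k : Fin 4) : k = 0 ∨ k = 1 ∨ k = 2 ∨ k = 3 := by revert k; decide

lemma fin3_cases (k : Fin 3) : k = 0 ∨ k = 1 ∨ k = 2 := by revert k; decide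

lemma invol_apply {π : Equiv.Perm (Fin n)} (hinv : IsInvolution π) (x : Fin n) :
    π (π x) = x := by
  nth_rewrite 1 [← hinv]
  exact π.symm_apply_apply x

lemma contains_p2341_of (π : Equiv.Perm (Fin n)) (w x y z : Fin n)
    (h1 : (w : ℕ) < x) (h2 : (x : ℕ) < y) (h3 : (y : ℕ) < z)
    (v1 : (π z : ℕ) < π w) (v2 : (π w : ℕ) < π x) (v3 : (π x : ℕ) < π y) :
    Contains π p2341 := by
  refine ⟨![w, x, y, z], ?_, ?_⟩
  · intro i j hij
    rcases fin4_cases i with rfl | rfl | rfl | rfl <;>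
      rcases fin4_cases j with rfl | rfl | rfl | rfl <;>
      simp only [Matrix.cons_val_zero, Matrix.cons_val_one, Matrix.head_cons,
        Matrix.cons_val_two, Matrix.tail_cons, Matrix.cons_val_three] <;>
      first
        | exact absurd hij (by decide)
        | exact Fin.lt_def.mpr (by omega)
  · intro i j
    rcases fin4_cases i with rfl | rfl | rfl | rfl <;>
      rcases fin4_cases j with rfl | rfl | rfl | rfl <;>
      simp only [Matrix.cons_val_zero, Matrix.cons_val_one, Matrix.head_cons,
        Matrix.cons_val_two, Matrix.tail_cons, Matrix.cons_val_three] <;>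
      first
        | exact iff_of_true (by decide) (Fin.lt_def.mpr (by omega))
        | exact iff_of_false (by decide) (fun hlt => by
            have := Fin.lt_def.mp hlt; omega)

lemma occ_of_contains123 {π : Equiv.Perm (Fin n)} (h : Contains π p123) :
    ∃ a b c : Fin n, (a : ℕ) < b ∧ (b : ℕ) < c ∧ (π a : ℕ) < π b ∧ (π b : ℕ) < π c := by
  obtain ⟨f, hf, hiff⟩ := h
  refine ⟨f 0, f 1, f 2, hf (by decide), hf (by decide), ?_, ?_⟩
  · exact (hiff 0 1).mp (by decide)
  · exact (hiff 1 2).mp (by decide)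

lemma contains123_of_contains2341 {π : Equiv.Perm (Fin n)}
    (h : Contains π p2341) : Contains π p123 := by
  obtain ⟨f, hf, hiff⟩ := h
  have h01 : (f 0 : ℕ) < f 1 := hf (by decide)
  have h12 : (f 1 : ℕ) < f 2 := hf (by decide)
  have k01 : (π (f 0) : ℕ) < π (f 1) := (hiff 0 1).mp (by decide)
  have k12 : (π (f 1) : ℕ) < π (f 2) := (hiff 1 2).mp (by decide)
  refine ⟨![f 0, f 1, f 2], ?_, ?_⟩
  · intro i j hij
    rcases fin3_cases i with rfl | rfl | rfl <;>
      rcases fin3_cases j with rfl | rfl | rfl <;>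
      simp only [Matrix.cons_val_zero, Matrix.cons_val_one, Matrix.head_cons,
        Matrix.cons_val_two, Matrix.tail_cons] <;>
      first
        | exact absurd hij (by decide)
        | exact Fin.lt_def.mpr (by omega)
  · intro i j
    rcases fin3_cases i with rfl | rfl | rfl <;>
      rcases fin3_cases j with rfl | rfl | rfl <;>
      simp only [Matrix.cons_val_zero, Matrix.cons_val_one, Matrix.head_cons,
        Matrix.cons_val_two, Matrix.tail_cons] <;>
      first
        | exact iff_of_true (by decide) (Fin.lt_def.mpr (by omega))
        | exact iff_of_false (by decide) (fun hlt => by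
            have := Fin.lt_def.mp hlt; omega)

lemma quad_of_contains2341 {π : Equiv.Perm (Fin n)} (h : Contains π p2341) :
    ∃ w x y z : Fin n, (w : ℕ) < x ∧ (x : ℕ) < y ∧ (y : ℕ) < z ∧
      (π z : ℕ) < π w ∧ (π w : ℕ) < π x ∧ (π x : ℕ) < π y := by
  obtain ⟨f, hf, hiff⟩ := h
  exact ⟨f 0, f 1, f 2, f 3, hf (by decide), hf (by decide), hf (by decide),
    (hiff 3 0).mp (by decide), (hiff 0 1).mp (by decide), (hiff 1 2).mp (by decide)⟩

end AuxiliaryLemmas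

section BandLemmas

variable {n : ℕ}

lemma band_subset {π : Equiv.Perm (Fin n)} {lo hi lo' hi' : Fin n}
    (h1 : ∀ x : Fin n, (lo : ℕ) ≤ x → (x : ℕ) ≤ hi → (lo' : ℕ) ≤ π x ∧ (π x : ℕ) ≤ hi') :
    (Finset.Icc lo hi).image π ⊆ Finset.Icc lo' hi' := by
  intro y hy
  simp only [Finset.mem_image, Finset.mem_Icc] at hy
  obtain ⟨x, ⟨hx1, hx2⟩, rfl⟩ := hy
  have := h1 x (Fin.le_def.mp hx1) (Fin.le_def.mp hx2)
  exact Finset.mem_Icc.mpr ⟨Fin.le_def.mpr this.1, Fin.le_def.mpr this.2⟩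

lemma band_card_le (π : Equiv.Perm (Fin n)) (lo hi lo' hi' : Fin n)
    (h1 : ∀ x : Fin n, (lo : ℕ) ≤ x → (x : ℕ) ≤ hi → (lo' : ℕ) ≤ π x ∧ (π x : ℕ) ≤ hi') :
    (hi : ℕ) + 1 - lo ≤ (hi' : ℕ) + 1 - lo' := by
  have h := Finset.card_le_card (band_subset h1)
  rwa [Finset.card_image_of_injective _ π.injective, Fin.card_Icc, Fin.card_Icc] at h

lemma band_kill {π : Equiv.Perm (Fin n)} (hs : IsSimple π)
    (lo hi lo' hi' : Fin n)
    (h1 : ∀ x : Fin n, (lo : ℕ) ≤ x → (x : ℕ) ≤ hi → (lo' : ℕ) ≤ π x ∧ (π x : ℕ) ≤ hi')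
    (hc : (hi : ℕ) - lo = (hi' : ℕ) - lo')
    (hlt : (lo : ℕ) < hi) (hle' : (lo' : ℕ) ≤ hi')
    (w : Fin n) (hw : (w : ℕ) < lo ∨ (hi : ℕ) < w) : False := by
  have himg : (Finset.Icc lo hi).image π = Finset.Icc lo' hi' := by
    apply Finset.eq_of_subset_of_card_le (band_subset h1)
    rw [Finset.card_image_of_injective _ π.injective, Fin.card_Icc, Fin.card_Icc]
    omega
  have hPI : IsPermInterval π (↑(Finset.Icc lo hi) : Set (Fin n)) := by
    constructor
    · intro i j k hi' hj' hik hkj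
      simp only [Finset.coe_Icc, Set.mem_Icc] at *
      exact ⟨le_trans hi'.1 hik, le_trans hkj hj'.2⟩
    · have : π '' (↑(Finset.Icc lo hi) : Set (Fin n)) = ↑(Finset.Icc lo' hi') := by
        rw [← himg, Finset.coe_image]
      rw [this]
      intro i j k hi' hj' hik hkj
      simp only [Finset.coe_Icc, Set.mem_Icc] at *
      exact ⟨le_trans hi'.1 hik, le_trans hkj hj'.2⟩
  rcases hs.2 _ hPI with h | h
  · rw [Set.ncard_coe_finset, Fin.card_Icc] at h
    omega
  · have hwmem : w ∈ (↑(Finset.Icc lo hi) : Set (Fin n)) := h ▸ Set.mem_univ w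
    simp only [Finset.coe_Icc, Set.mem_Icc] at hwmem
    have := Fin.le_def.mp hwmem.1
    have := Fin.le_def.mp hwmem.2
    omega

end BandLemmas

section MainLemma

lemma forward_hard {n : ℕ} (π : Equiv.Perm (Fin n))
    (hsimple : IsSimple π) (hinv : IsInvolution π)
    (hav : ¬ Contains π p2341) (h123 : Contains π p123) :
    ∃ h : n = 7, π = (finCongr h.symm).permCongr p5274163 := by
  classical
  have hinv2 : ∀ x : Fin n, π (π x) = x := invol_apply hinv
  obtain ⟨a0, b0, c0, hab0, hbc0, hva0, hvb0⟩ := occ_of_contains123 h123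
  -- choose c minimal among ends of occurrences
  set SC : Finset (Fin n) := Finset.univ.filter
    (fun z => ∃ x y : Fin n, (x : ℕ) < y ∧ (y : ℕ) < z ∧ (π x : ℕ) < π y ∧ (π y : ℕ) < π z)
    with hSC
  have hSCne : SC.Nonempty := ⟨c0, by
    simp only [hSC, Finset.mem_filter, Finset.mem_univ, true_and]
    exact ⟨a0, b0, hab0, hbc0, hva0, hvb0⟩⟩
  set c : Fin n := SC.min' hSCne with hcdef
  have hF0 : ∀ x y z : Fin n, (x : ℕ) < y → (y : ℕ) < z → (π x : ℕ) < π y →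
      (π y : ℕ) < π z → (c : ℕ) ≤ z := by
    intro x y z h1 h2 h3 h4
    exact Fin.le_def.mp (SC.min'_le z (by
      simp only [hSC, Finset.mem_filter, Finset.mem_univ, true_and]
      exact ⟨x, y, h1, h2, h3, h4⟩))
  have hcmem : ∃ x y : Fin n, (x : ℕ) < y ∧ (y : ℕ) < c ∧ (π x : ℕ) < π y ∧
      (π y : ℕ) < π c := by
    have := SC.min'_mem hSCne
    simpa only [hSC, Finset.mem_filter, Finset.mem_univ, true_and] using this
  -- choose b minimal among middles of occurrences ending at c
  set SB : Finset (Fin n) := Finset.univ.filter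
    (fun y => ∃ x : Fin n, (x : ℕ) < y ∧ (y : ℕ) < c ∧ (π x : ℕ) < π y ∧ (π y : ℕ) < π c)
    with hSB
  have hSBne : SB.Nonempty := by
    obtain ⟨x, y, h1, h2, h3, h4⟩ := hcmem
    exact ⟨y, by
      simp only [hSB, Finset.mem_filter, Finset.mem_univ, true_and]
      exact ⟨x, h1, h2, h3, h4⟩⟩
  set b : Fin n := SB.min' hSBne with hbdef
  have hF1 : ∀ x y : Fin n, (x : ℕ) < y → (y : ℕ) < c → (π x : ℕ) < π y →
      (π y : ℕ) < π c → (b : ℕ) ≤ y := by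
    intro x y h1 h2 h3 h4
    exact Fin.le_def.mp (SB.min'_le y (by
      simp only [hSB, Finset.mem_filter, Finset.mem_univ, true_and]
      exact ⟨x, h1, h2, h3, h4⟩))
  have hbmem : ∃ x : Fin n, (x : ℕ) < b ∧ (b : ℕ) < c ∧ (π x : ℕ) < π b ∧
      (π b : ℕ) < π c := by
    have := SB.min'_mem hSBne
    simpa only [hSB, Finset.mem_filter, Finset.mem_univ, true_and] using this
  -- choose a minimal among starts
  set SA : Finset (Fin n) := Finset.univ.filter
    (fun x => (x : ℕ) < b ∧ (π x : ℕ) < π b) with hSA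
  have hSAne : SA.Nonempty := by
    obtain ⟨x, h1, _, h3, _⟩ := hbmem
    exact ⟨x, by simp only [hSA, Finset.mem_filter, Finset.mem_univ, true_and]; exact ⟨h1, h3⟩⟩
  set a : Fin n := SA.min' hSAne with hadef
  have hF2 : ∀ x : Fin n, (x : ℕ) < b → (π x : ℕ) < π b → (a : ℕ) ≤ x := by
    intro x h1 h2
    exact Fin.le_def.mp (SA.min'_le x (by
      simp only [hSA, Finset.mem_filter, Finset.mem_univ, true_and]; exact ⟨h1, h2⟩))
  have hamem : (a : ℕ) < b ∧ (π a : ℕ) < π b := by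
    have := SA.min'_mem hSAne
    simpa only [hSA, Finset.mem_filter, Finset.mem_univ, true_and] using this
  obtain ⟨hab, hvab⟩ := hamem
  obtain ⟨x', hx'1, hbc, hx'2, hvbc⟩ := hbmem
  clear_value a b c
  clear hadef hbdef hcdef hSAne hSBne hSCne hSA hSB hSC SA SB SC
  clear hx'1 hx'2 x' hab0 hbc0 hva0 hvb0 a0 b0 c0 h123 hcmem
  -- basic injectivity tools
  have hinj : ∀ {u v : Fin n}, (π u : ℕ) = (π v : ℕ) → (u : ℕ) = (v : ℕ) := by
    intro u v h
    have : π u = π v := Fin.ext h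
    exact congrArg Fin.val (π.injective this)
  -- region lemmas
  have R4 : ∀ x : Fin n, (c : ℕ) < x → (π a : ℕ) < π x := by
    intro x hx
    by_contra hcon
    refine hav (contains_p2341_of π a b c x hab hbc hx ?_ hvab hvbc)
    rcases lt_or_eq_of_le (not_lt.mp hcon) with h | h
    · exact h
    · exact absurd (hinj h) (by omega)
  have R1 : ∀ x : Fin n, (x : ℕ) < a → (π b : ℕ) < π x ∧ (π x : ℕ) < π c := by
    intro x hx
    constructor
    · by_contra hcon
      have hne : (π x : ℕ) ≠ (π b : ℕ) := fun h => absurd (hinj h) (by omega)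
      have hlt : (π x : ℕ) < π b := by omega
      have := hF2 x (by omega) hlt
      omega
    · by_contra hcon
      have hne : (π x : ℕ) ≠ (π c : ℕ) := fun h => absurd (hinj h) (by omega)
      have hgt : (π c : ℕ) < π x := by omega
      -- 4123 pattern (x,a,b,c): use reflected points to get 2341
      refine hav (contains_p2341_of π (π a) (π b) (π c) (π x) hvab hvbc hgt ?_ ?_ ?_)
      · rw [hinv2, hinv2]; omega
      · rw [hinv2, hinv2]; omega
      · rw [hinv2, hinv2]; omega
  have R2 : ∀ x : Fin n, (a : ℕ) < x → (x : ℕ) < b →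
      (π x : ℕ) < π a ∨ (π c : ℕ) < π x := by
    intro x hx1 hx2
    by_contra hcon
    push_neg at hcon
    have hne1 : (π x : ℕ) ≠ (π a : ℕ) := fun h => absurd (hinj h) (by omega)
    have hne2 : (π x : ℕ) ≠ (π c : ℕ) := fun h => absurd (hinj h) (by omega)
    have := hF1 a x hx1 (by omega) (by omega) (by omega)
    omega
  have R3 : ∀ x : Fin n, (b : ℕ) < x → (x : ℕ) < c → (π x : ℕ) < π b := by
    intro x hx1 hx2
    by_contra hcon
    have hne : (π x : ℕ) ≠ (π b : ℕ) := fun h => absurd (hinj h) (by omega)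
    have := hF0 a b x hab hx1 hvab (by omega)
    omega
  have R5 : (c : ℕ) ≤ π c := by
    have := hF0 (π a) (π b) (π c) hvab hvbc (by rw [hinv2, hinv2]; exact hab)
      (by rw [hinv2, hinv2]; exact hbc)
    exact this
  -- reflected region lemmas
  have R1' : ∀ y : Fin n, (π y : ℕ) < a → (π b : ℕ) < y ∧ (y : ℕ) < π c := by
    intro y hy
    have := R1 (π y) hy
    rwa [hinv2] at this
  have R2' : ∀ y : Fin n, (a : ℕ) < π y → (π y : ℕ) < b →
      (y : ℕ) < π a ∨ (π c : ℕ) < y := by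
    intro y h1 h2
    have := R2 (π y) h1 h2
    rwa [hinv2] at this
  have R3' : ∀ y : Fin n, (b : ℕ) < π y → (π y : ℕ) < c → (y : ℕ) < π b := by
    intro y h1 h2
    have := R3 (π y) h1 h2
    rwa [hinv2] at this
  have R4' : ∀ y : Fin n, (c : ℕ) < π y → (π a : ℕ) < y := by
    intro y hy
    have := R4 (π y) hy
    rwa [hinv2] at this
  -- Step 1 : b ≤ π b
  have step1 : (b : ℕ) ≤ π b := by
    by_contra hcon
    push_neg at hcon
    rcases lt_trichotomy ((π b : ℕ)) (a : ℕ) with h | h | h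
    · have h1 := R1 (π b) h
      rw [hinv2] at h1
      have h2 := R1 (π a) (by omega)
      rw [hinv2] at h2
      have := hF1 (π a) (π b) (by omega) (by omega)
        (by rw [hinv2, hinv2]; exact hab) (by rw [hinv2]; omega)
      omega
    · have hπb : π b = a := Fin.ext h
      have hπa : (π a : ℕ) = b := by
        rw [← hπb, hinv2]
      omega
    · rcases R2 (π b) h hcon with h2 | h2
      · rw [hinv2] at h2; omega
      · rw [hinv2] at h2; omega
  -- Step 2 : a ≤ π a
  have step2 : (a : ℕ) ≤ π a := by
    by_contra hcon
    push_neg at hcon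
    have := R1 (π a) hcon
    rw [hinv2] at this
    omega
  -- positions of the values
  have hVAltC : (π a : ℕ) < c := by
    rcases lt_trichotomy ((π a : ℕ)) (c : ℕ) with h | h | h
    · exact h
    · exfalso
      have hπa : π a = c := Fin.ext h
      have : (π c : ℕ) = a := by rw [← hπa, hinv2]
      omega
    · exfalso
      have := R4 (π a) h
      rw [hinv2] at this
      omega
  have hVAneB : (π a : ℕ) ≠ b := by
    intro h
    have hπa : π a = b := Fin.ext h
    have : (π b : ℕ) = a := by rw [← hπa, hinv2]
    omega
  have hVBneC : (π b : ℕ) ≠ c := by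
    intro h
    have hπb : π b = c := Fin.ext h
    have : (π c : ℕ) = b := by rw [← hπb, hinv2]
    omega
  have hcn : (c : ℕ) < n := c.2
  -- main case analysis
  by_cases hA : (π a : ℕ) = a
  · have hπaF : π a = a := Fin.ext hA
    by_cases hB : (π b : ℕ) = b
    · have hπbF : π b = b := Fin.ext hB
      by_cases hC : (π c : ℕ) = c
      · have hπcF : π c = c := Fin.ext hC
        -- CASE D : a, b, c all fixed
        have d1 : ∀ x : Fin n, (x : ℕ) < a → (b : ℕ) < π x ∧ (π x : ℕ) < c := by
          intro x hx
          have := R1 x hx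
          omega
        have d1' : ∀ y : Fin n, (π y : ℕ) < a → (b : ℕ) < y ∧ (y : ℕ) < c := by
          intro y hy
          have := R1' y hy
          omega
        have d2 : ∀ x : Fin n, (a : ℕ) < x → (x : ℕ) < b → (c : ℕ) < π x := by
          intro x h1 h2
          rcases R2 x h1 h2 with h | h
          · have := (d1' x (by omega)).1
            omega
          · omega
        have d2' : ∀ y : Fin n, (a : ℕ) < π y → (π y : ℕ) < b → (c : ℕ) < y := by
          intro y h1 h2
          rcases R2' y h1 h2 with h | h
          · have := (d1 y (by omega)).1
            omega
          · omega
        have d3 : ∀ x : Fin n, (b : ℕ) < x → (x : ℕ) < c → (π x : ℕ) < a := by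
          intro x h1 h2
          have h3 := R3 x h1 h2
          rcases lt_trichotomy ((π x : ℕ)) ((a : ℕ)) with h | h | h
          · exact h
          · exfalso
            have hxa : x = a := π.injective (Fin.ext (by omega))
            have := congrArg Fin.val hxa
            omega
          · exfalso
            have := d2' x h (by omega)
            omega
        have d3' : ∀ y : Fin n, (b : ℕ) < π y → (π y : ℕ) < c → (y : ℕ) < a := by
          intro y h1 h2
          have := d3 (π y) h1 h2
          rwa [hinv2] at this
        -- rule out b = a + 1
        have hq1 : (a : ℕ) + 1 < b := by
          by_contra hcon
          exact band_kill hsimple a b a b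
            (by
              intro x hx1 hx2
              have : (x : ℕ) = a ∨ (x : ℕ) = b := by omega
              rcases this with h | h
              · have : x = a := Fin.ext h
                rw [this, hπaF]; omega
              · have : x = b := Fin.ext h
                rw [this, hπbF]; omega)
            rfl (by omega) (by omega) c (by omega)
        -- rule out c = b + 1
        have hp1 : (b : ℕ) + 1 < c := by
          by_contra hcon
          exact band_kill hsimple b c b c
            (by
              intro x hx1 hx2
              have : (x : ℕ) = b ∨ (x : ℕ) = c := by omega
              rcases this with h | h
              · have : x = b := Fin.ext h
                rw [this, hπbF]; omega
              · have : x = c := Fin.ext h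
                rw [this, hπcF]; omega)
            rfl (by omega) (by omega) a (by omega)
        -- the top-right corner is empty
        have hT : ∀ x : Fin n, (c : ℕ) < x → (c : ℕ) < π x → False := by
          intro t ht1 ht2
          set TS : Finset (Fin n) := Finset.univ.filter
            (fun s => (c : ℕ) < s ∧ (c : ℕ) < π s) with hTS
          have hTSne : TS.Nonempty := ⟨t, by
            simp only [hTS, Finset.mem_filter, Finset.mem_univ, true_and]
            exact ⟨ht1, ht2⟩⟩
          set t0 : Fin n := TS.min' hTSne with ht0def
          have ht0 : (c : ℕ) < t0 ∧ (c : ℕ) < π t0 := by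
            have := TS.min'_mem hTSne
            simpa only [hTS, Finset.mem_filter, Finset.mem_univ, true_and] using this
          have hmin : ∀ s : Fin n, (c : ℕ) < s → (c : ℕ) < π s → (t0 : ℕ) ≤ s := by
            intro s h1 h2
            exact Fin.le_def.mp (TS.min'_le s (by
              simp only [hTS, Finset.mem_filter, Finset.mem_univ, true_and]
              exact ⟨h1, h2⟩))
          clear_value t0
          clear ht0def hTSne hTS TS ht1 ht2 t
          have hzt : ∀ s z : Fin n, (c : ℕ) < s → (c : ℕ) < π s → (a : ℕ) < π z →
              (π z : ℕ) < b → (s : ℕ) < z → False := by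
            intro s z h1 h2 h3 h4 h5
            exact hav (contains_p2341_of π b c s z hbc h1 h5
              (by omega) (by omega) (by omega))
          have hsuf : ∀ x : Fin n, (t0 : ℕ) ≤ x → (c : ℕ) < π x := by
            intro x hx
            have hcx : (c : ℕ) < x := by omega
            have h4 := R4 x hcx
            rcases lt_trichotomy ((π x : ℕ)) ((b : ℕ)) with h | h | h
            · exfalso
              rcases lt_or_eq_of_le hx with h6 | h6
              · exact hzt t0 x ht0.1 ht0.2 (by omega) h h6
              · have hxt : x = t0 := Fin.ext h6.symm
                have := congrArg (fun u => (π u : ℕ)) hxt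
                omega
            · exfalso
              have hxb : x = b := π.injective (Fin.ext (by omega))
              have := congrArg Fin.val hxb
              omega
            · rcases lt_trichotomy ((π x : ℕ)) ((c : ℕ)) with h' | h' | h'
              · have := d3' x h h'
                omega
              · exfalso
                have hxc : x = c := π.injective (Fin.ext (by omega))
                have := congrArg Fin.val hxc
                omega
              · exact h'
          have htn : (t0 : ℕ) < n := t0.2
          by_cases hlast : (t0 : ℕ) = n - 1
          · -- t0 is the last column and is fixed
            have hto : (t0 : ℕ) ≤ π t0 := by
              have h1 := hsuf t0 le_rfl
              have h2 : (c : ℕ) < π (π t0) := by rw [hinv2]; omega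
              exact hmin (π t0) h1 h2
            have hfix : π t0 = t0 := by
              apply Fin.ext
              have := (π t0).2
              omega
            exact band_kill hsimple ⟨0, by omega⟩ ⟨n - 2, by omega⟩
              ⟨0, by omega⟩ ⟨n - 2, by omega⟩
              (by
                intro x hx1 hx2
                have hx2' : (x : ℕ) ≤ n - 2 := hx2
                refine ⟨by show (0:ℕ) ≤ (π x : ℕ); omega, ?_⟩
                show (π x : ℕ) ≤ n - 2
                by_contra hcon
                push_neg at hcon
                have hpv : (π x : ℕ) = n - 1 := by have := (π x).2; omega
                have hxx : π x = t0 := Fin.ext (by omega)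
                have h6 := congrArg π hxx
                rw [hinv2, hfix] at h6
                have := congrArg Fin.val h6
                omega)
              rfl (by show (0:ℕ) < n - 2; omega) (by show (0:ℕ) ≤ n - 2; omega)
              t0 (by show (t0 : ℕ) < 0 ∨ n - 2 < (t0 : ℕ); omega)
          · -- band [t0, n-1]
            exact band_kill hsimple t0 ⟨n - 1, by omega⟩ t0 ⟨n - 1, by omega⟩
              (by
                intro x hx1 hx2
                refine ⟨?_, by show (π x : ℕ) ≤ n - 1; have := (π x).2; omega⟩
                show (t0 : ℕ) ≤ (π x : ℕ)
                have h1 := hsuf x hx1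
                have h2 : (c : ℕ) < π (π x) := by rw [hinv2]; omega
                exact hmin (π x) h1 h2)
              rfl (by show (t0 : ℕ) < n - 1; omega)
              (by show (t0 : ℕ) ≤ n - 1; omega)
              a (by omega)
        -- columns after c
        have d4 : ∀ x : Fin n, (c : ℕ) < x → (a : ℕ) < π x ∧ (π x : ℕ) < b := by
          intro x hx
          have h4 := R4 x hx
          rcases lt_trichotomy ((π x : ℕ)) ((b : ℕ)) with h | h | h
          · exact ⟨by omega, h⟩
          · exfalso
            have hxb : x = b := π.injective (Fin.ext (by omega))
            have := congrArg Fin.val hxb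
            omega
          · exfalso
            rcases lt_trichotomy ((π x : ℕ)) ((c : ℕ)) with h' | h' | h'
            · have := d3' x h h'
              omega
            · have hxc : x = c := π.injective (Fin.ext (by omega))
              have := congrArg Fin.val hxc
              omega
            · exact hT x hx h'
        -- c < n - 1
        have ha1n : (a : ℕ) + 1 < n := by omega
        have hccc : (c : ℕ) < n - 1 := by
          have h1 := d2 ⟨(a : ℕ) + 1, ha1n⟩ (by show (a:ℕ) < (a:ℕ)+1; omega)
            (by show (a:ℕ)+1 < (b:ℕ); omega)
          have h2 := (π ⟨(a : ℕ) + 1, ha1n⟩).2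
          omega
        -- a ≥ 1
        have hb1n : (b : ℕ) + 1 < n := by omega
        have hyb : (π (π ⟨(b : ℕ) + 1, hb1n⟩) : ℕ) = (b : ℕ) + 1 := by rw [hinv2]
        have ha0 : 0 < (a : ℕ) := by
          have := d3' (π ⟨(b : ℕ) + 1, hb1n⟩) (by omega) (by omega)
          omega
        -- counting : a = c - b - 1
        have le1 : ((a:ℕ) - 1) + 1 - 0 ≤ ((c:ℕ) - 1) + 1 - ((b:ℕ) + 1) :=
          band_card_le π ⟨0, by omega⟩ ⟨(a:ℕ) - 1, by omega⟩ ⟨(b:ℕ) + 1, by omega⟩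
            ⟨(c:ℕ) - 1, by omega⟩
            (by
              intro x hx1 hx2
              have hx2' : (x : ℕ) ≤ (a:ℕ) - 1 := hx2
              have := d1 x (by omega)
              exact ⟨by show (b:ℕ)+1 ≤ (π x : ℕ); omega,
                by show (π x : ℕ) ≤ (c:ℕ)-1; omega⟩)
        have le2 : ((c:ℕ) - 1) + 1 - ((b:ℕ) + 1) ≤ ((a:ℕ) - 1) + 1 - 0 :=
          band_card_le π ⟨(b:ℕ) + 1, by omega⟩ ⟨(c:ℕ) - 1, by omega⟩ ⟨0, by omega⟩
            ⟨(a:ℕ) - 1, by omega⟩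
            (by
              intro x hx1 hx2
              have hx1' : (b:ℕ) + 1 ≤ (x : ℕ) := hx1
              have hx2' : (x : ℕ) ≤ (c:ℕ) - 1 := hx2
              have := d3 x (by omega) (by omega)
              exact ⟨by show (0:ℕ) ≤ (π x : ℕ); omega,
                by show (π x : ℕ) ≤ (a:ℕ)-1; omega⟩)
        have hcount1 : (a : ℕ) = (c:ℕ) - b - 1 := by omega
        -- counting : b - a - 1 = n - 1 - c
        have le3 : ((b:ℕ) - 1) + 1 - ((a:ℕ) + 1) ≤ (n - 1) + 1 - ((c:ℕ) + 1) :=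
          band_card_le π ⟨(a:ℕ) + 1, by omega⟩ ⟨(b:ℕ) - 1, by omega⟩ ⟨(c:ℕ) + 1, by omega⟩
            ⟨n - 1, by omega⟩
            (by
              intro x hx1 hx2
              have hx1' : (a:ℕ) + 1 ≤ (x : ℕ) := hx1
              have hx2' : (x : ℕ) ≤ (b:ℕ) - 1 := hx2
              have := d2 x (by omega) (by omega)
              have := (π x).2
              exact ⟨by show (c:ℕ)+1 ≤ (π x : ℕ); omega,
                by show (π x : ℕ) ≤ n-1; omega⟩)
        have le4 : (n - 1) + 1 - ((c:ℕ) + 1) ≤ ((b:ℕ) - 1) + 1 - ((a:ℕ) + 1) :=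
          band_card_le π ⟨(c:ℕ) + 1, by omega⟩ ⟨n - 1, by omega⟩ ⟨(a:ℕ) + 1, by omega⟩
            ⟨(b:ℕ) - 1, by omega⟩
            (by
              intro x hx1 hx2
              have hx1' : (c:ℕ) + 1 ≤ (x : ℕ) := hx1
              have := d4 x (by omega)
              exact ⟨by show (a:ℕ)+1 ≤ (π x : ℕ); omega,
                by show (π x : ℕ) ≤ (b:ℕ)-1; omega⟩)
        have hcount2 : (b:ℕ) - a - 1 = n - 1 - c := by omega
        -- a = 1
        have hA1 : (a : ℕ) = 1 := by
          by_contra hcon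
          exact band_kill hsimple ⟨0, by omega⟩ ⟨(a:ℕ) - 1, by omega⟩ ⟨(b:ℕ) + 1, by omega⟩
            ⟨(c:ℕ) - 1, by omega⟩
            (by
              intro x hx1 hx2
              have hx2' : (x : ℕ) ≤ (a:ℕ) - 1 := hx2
              have := d1 x (by omega)
              exact ⟨by show (b:ℕ)+1 ≤ (π x : ℕ); omega,
                by show (π x : ℕ) ≤ (c:ℕ)-1; omega⟩)
            (by show (a:ℕ) - 1 - 0 = (c:ℕ) - 1 - ((b:ℕ)+1); omega)
            (by show (0:ℕ) < (a:ℕ) - 1; omega)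
            (by show (b:ℕ)+1 ≤ (c:ℕ)-1; omega)
            a (by show (a:ℕ) < 0 ∨ (a:ℕ)-1 < (a:ℕ); omega)
        -- b = a + 2
        have hBA : (b : ℕ) = (a:ℕ) + 2 := by
          by_contra hcon
          exact band_kill hsimple ⟨(a:ℕ) + 1, by omega⟩ ⟨(b:ℕ) - 1, by omega⟩
            ⟨(c:ℕ) + 1, by omega⟩ ⟨n - 1, by omega⟩
            (by
              intro x hx1 hx2
              have hx1' : (a:ℕ) + 1 ≤ (x : ℕ) := hx1
              have hx2' : (x : ℕ) ≤ (b:ℕ) - 1 := hx2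
              have := d2 x (by omega) (by omega)
              have := (π x).2
              exact ⟨by show (c:ℕ)+1 ≤ (π x : ℕ); omega,
                by show (π x : ℕ) ≤ n-1; omega⟩)
            (by show (b:ℕ)-1 - ((a:ℕ)+1) = n-1 - ((c:ℕ)+1); omega)
            (by show (a:ℕ)+1 < (b:ℕ)-1; omega)
            (by show (c:ℕ)+1 ≤ n-1; omega)
            a (by show (a:ℕ) < (a:ℕ)+1 ∨ (b:ℕ)-1 < (a:ℕ); omega)
        have hn7 : n = 7 := by omega
        have hAv : (a : ℕ) = 1 := hA1
        have hBv : (b : ℕ) = 3 := by omega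
        have hCv : (c : ℕ) = 5 := by omega
        -- determine all values
        have hval : ∀ x : Fin n, ((x:ℕ) = 0 → (π x : ℕ) = 4) ∧ ((x:ℕ) = 1 → (π x : ℕ) = 1) ∧
            ((x:ℕ) = 2 → (π x : ℕ) = 6) ∧ ((x:ℕ) = 3 → (π x : ℕ) = 3) ∧
            ((x:ℕ) = 4 → (π x : ℕ) = 0) ∧ ((x:ℕ) = 5 → (π x : ℕ) = 5) ∧
            ((x:ℕ) = 6 → (π x : ℕ) = 2) := by
          intro x
          refine ⟨?_, ?_, ?_, ?_, ?_, ?_, ?_⟩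
          · intro hx
            have := d1 x (by omega)
            omega
          · intro hx
            have hxa : x = a := Fin.ext (by omega)
            rw [hxa, hπaF]; omega
          · intro hx
            have h1 := d2 x (by omega) (by omega)
            have h2 := (π x).2
            omega
          · intro hx
            have hxb : x = b := Fin.ext (by omega)
            rw [hxb, hπbF]; omega
          · intro hx
            have := d3 x (by omega) (by omega)
            omega
          · intro hx
            have hxc : x = c := Fin.ext (by omega)
            rw [hxc, hπcF]; omega
          · intro hx
            have := d4 x (by omega)
            omega
        refine ⟨hn7, ?_⟩
        apply Equiv.ext
        intro i
        apply Fin.ext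
        rw [Equiv.permCongr_apply, finCongr_symm]
        rw [finCongr_apply_coe]
        have hi7 : (i : ℕ) < 7 := by omega
        obtain ⟨h0, h1, h2, h3, h4, h5, h6⟩ := hval i
        have hicoe : ((finCongr hn7 i : Fin 7) : ℕ) = (i : ℕ) := finCongr_apply_coe hn7 i
        have hcase : (i:ℕ) = 0 ∨ (i:ℕ) = 1 ∨ (i:ℕ) = 2 ∨ (i:ℕ) = 3 ∨ (i:ℕ) = 4 ∨
            (i:ℕ) = 5 ∨ (i:ℕ) = 6 := by omega
        have hpv : ∀ j : Fin 7, ((j:ℕ)=0 → (p5274163 j:ℕ)=4) ∧ ((j:ℕ)=1 → (p5274163 j:ℕ)=1) ∧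
            ((j:ℕ)=2 → (p5274163 j:ℕ)=6) ∧ ((j:ℕ)=3 → (p5274163 j:ℕ)=3) ∧
            ((j:ℕ)=4 → (p5274163 j:ℕ)=0) ∧ ((j:ℕ)=5 → (p5274163 j:ℕ)=5) ∧
            ((j:ℕ)=6 → (p5274163 j:ℕ)=2) := by decide
        obtain ⟨g0, g1, g2, g3, g4, g5, g6⟩ := hpv (finCongr hn7 i)
        rcases hcase with h | h | h | h | h | h | h
        · rw [g0 (by omega)]; exact h0 h
        · rw [g1 (by omega)]; exact h1 h
        · rw [g2 (by omega)]; exact h2 h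
        · rw [g3 (by omega)]; exact h3 h
        · rw [g4 (by omega)]; exact h4 h
        · rw [g5 (by omega)]; exact h5 h
        · rw [g6 (by omega)]; exact h6 h
      · -- CASE C : c < π c
        have hCC : (c : ℕ) < π c := by omega
        by_cases hq : (b : ℕ) = a + 1
        · exact absurd (band_kill hsimple a b a b
            (by
              intro x hx1 hx2
              have : (x : ℕ) = a ∨ (x : ℕ) = b := by omega
              rcases this with h | h
              · have : x = a := Fin.ext h
                rw [this, hπaF]; omega
              · have : x = b := Fin.ext h
                rw [this, hπbF]; omega)
            rfl (by omega) (by omega) c (by omega)) (fun h => h)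
        · -- a + 1 < b ; z := column of value a+1
          have ha1n : (a : ℕ) + 1 < n := by omega
          set z : Fin n := π ⟨(a : ℕ) + 1, ha1n⟩ with hzdef
          have hzval : (π z : ℕ) = (a : ℕ) + 1 := by
            rw [hzdef, hinv2]
          have hz : (π c : ℕ) < z := by
            rcases R2' z (by omega) (by omega) with h | h
            · exfalso
              have := (R1 z (by omega)).1
              omega
            · omega
          exact absurd (band_kill hsimple c (π c) c (π c)
            (by
              intro x hx1 hx2
              rcases eq_or_lt_of_le hx1 with h | h
              · have : x = c := Fin.ext h.symm
                rw [this]; omega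
              rcases eq_or_lt_of_le hx2 with h | h
              · have : x = π c := Fin.ext h
                rw [this, hinv2]; omega
              -- c < x < π c
              constructor
              · by_contra hcon
                push_neg at hcon
                have h4 := R4 x (by omega)
                rcases lt_trichotomy ((π x : ℕ)) (b : ℕ) with h' | h' | h'
                · rcases R2' x (by omega) h' with h3 | h3 <;> omega
                · have hxb : x = b := π.injective (Fin.ext (by omega))
                  have := congrArg Fin.val hxb
                  omega
                · have := R3' x h' (by omega)
                  omega
              · by_contra hcon
                push_neg at hcon
                rcases lt_trichotomy ((π x : ℕ)) ((π c : ℕ)) with h' | h' | h'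
                · omega
                · have hxc : x = c := π.injective (Fin.ext (by omega))
                  have := congrArg Fin.val hxc
                  omega
                · exact hav (contains_p2341_of π b c x z (by omega) (by omega) (by omega)
                    (by omega) (by omega) (by omega)))
            rfl (by omega) (by omega) a (by omega)) (fun h => h)
    · -- a fixed, b < π b
      have hBB : (b : ℕ) < π b := by omega
      by_cases hvbC : (π b : ℕ) < c
      · -- CASE B1 : band [b, π b]
        exact absurd (band_kill hsimple b (π b) b (π b)
          (by
            intro x hx1 hx2
            rcases eq_or_lt_of_le hx1 with h | h
            · have : x = b := Fin.ext h.symm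
              rw [this]; omega
            rcases eq_or_lt_of_le hx2 with h | h
            · have : x = π b := Fin.ext h
              rw [this, hinv2]; omega
            have h3 := R3 x (by omega) (by omega)
            constructor
            · by_contra hcon
              push_neg at hcon
              rcases lt_trichotomy ((π x : ℕ)) (a : ℕ) with h' | h' | h'
              · have := (R1' x h').1
                omega
              · have hxa : x = a := π.injective (Fin.ext (by omega))
                have := congrArg Fin.val hxa
                omega
              · rcases lt_trichotomy ((π x : ℕ)) (b : ℕ) with h'' | h'' | h''
                · rcases R2' x h' h'' with h4 | h4 <;> omega
                · have h5 : π x = b := Fin.ext h''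
                  have h6 := congrArg π h5
                  rw [hinv2] at h6
                  have := congrArg Fin.val h6
                  omega
                · omega
            · omega)
          rfl (by omega) (by omega) a (by omega)) (fun h => h)
      · -- CASE B2 : a fixed, π b > c ; then a = 0, π 0 = 0
        have hvbC' : (c : ℕ) < π b := by omega
        have hA0 : (a : ℕ) = 0 := by
          by_contra hcon
          have hn0 : 0 < n := by omega
          set y : Fin n := π ⟨0, hn0⟩ with hydef
          have hyval : (π y : ℕ) = 0 := by rw [hydef, hinv2]
          have h1 := (R1' y (by omega)).1
          have h2 := R4 y (by omega)
          omega
        exact absurd (band_kill hsimple ⟨1, by omega⟩ ⟨n - 1, by omega⟩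
          ⟨1, by omega⟩ ⟨n - 1, by omega⟩
          (by
            intro x hx1 hx2
            have hx1' : 1 ≤ (x:ℕ) := hx1
            have hx2' : (x:ℕ) ≤ n - 1 := hx2
            refine ⟨?_, ?_⟩
            · show (1:ℕ) ≤ (π x : ℕ)
              by_contra hcon
              push_neg at hcon
              have h5 : π x = a := Fin.ext (by omega)
              have h6 := congrArg π h5
              rw [hinv2, hπaF] at h6
              have := congrArg Fin.val h6
              omega
            · show (π x : ℕ) ≤ n - 1
              have := (π x).2
              omega)
          rfl (by show (1:ℕ) < n - 1; omega) (by show (1:ℕ) ≤ n - 1; omega)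
          a (by show (a:ℕ) < 1 ∨ n - 1 < (a:ℕ); omega)) (fun h => h)
  · -- a < π a
    have hAA : (a : ℕ) < π a := by omega
    by_cases hvaB : (π a : ℕ) < b
    · -- CASE A1 : band [a, π a]
      exact absurd (band_kill hsimple a (π a) a (π a)
        (by
          intro x hx1 hx2
          rcases eq_or_lt_of_le hx1 with h | h
          · have : x = a := Fin.ext h.symm
            rw [this]; omega
          rcases eq_or_lt_of_le hx2 with h | h
          · have : x = π a := Fin.ext h
            rw [this, hinv2]; omega
          rcases R2 x (by omega) (by omega) with h2 | h2
          · constructor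
            · by_contra hcon
              push_neg at hcon
              rcases lt_trichotomy ((π x : ℕ)) (a : ℕ) with h' | h' | h'
              · have := (R1' x h').1
                omega
              · have h5 : π x = a := Fin.ext h'
                have h6 := congrArg π h5
                rw [hinv2] at h6
                have := congrArg Fin.val h6
                omega
              · omega
            · omega
          · exfalso
            have := R4' x (by omega)
            omega)
        rfl (by omega) (by omega) b (by omega)) (fun h => h)
    · -- b < π a < c
      have hvaB' : (b : ℕ) < π a := by omega
      by_cases hvbc2 : (π b : ℕ) < c
      · -- CASE A2a : band [a, π b]
        exact absurd (band_kill hsimple a (π b) a (π b)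
          (by
            intro x hx1 hx2
            rcases eq_or_lt_of_le hx1 with h | h
            · have : x = a := Fin.ext h.symm
              rw [this]; omega
            rcases lt_trichotomy ((x : ℕ)) (b : ℕ) with hxb | hxb | hxb
            · rcases R2 x (by omega) hxb with h2 | h2
              · constructor
                · by_contra hcon
                  push_neg at hcon
                  rcases lt_trichotomy ((π x : ℕ)) (a : ℕ) with h' | h' | h'
                  · have := (R1' x h').1
                    omega
                  · have h5 : π x = a := Fin.ext h'
                    have h6 := congrArg π h5
                    rw [hinv2] at h6
                    have := congrArg Fin.val h6
                    omega
                  · omega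
                · omega
              · exfalso
                have := R4' x (by omega)
                omega
            · have : x = b := Fin.ext hxb
              rw [this]; omega
            · rcases eq_or_lt_of_le hx2 with h | h
              · have : x = π b := Fin.ext h
                rw [this, hinv2]; omega
              have h3 := R3 x hxb (by omega)
              constructor
              · by_contra hcon
                push_neg at hcon
                have : (π x : ℕ) < a := by omega
                have := (R1' x this).1
                omega
              · omega)
          rfl (by omega) (by omega) c (by omega)) (fun h => h)
      · -- CASE A2b : π b > c : contradiction with R4
        have : (c : ℕ) < π b := by omega
        have := R4 (π b) this
        rw [hinv2] at this
        omega

end MainLemma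


/-- A simple involution avoids `2341` iff it is the permutation `5274163` or it
avoids `123`. -/
theorem simple_involution_av2341_iff {n : ℕ} (π : Equiv.Perm (Fin n))
    (hsimple : IsSimple π) (hinv : IsInvolution π) :
    ¬ Contains π p2341 ↔
      ((∃ h : n = 7, π = (finCongr h.symm).permCongr p5274163) ∨ ¬ Contains π p123) := by
  constructor
  · intro hav
    by_cases h123 : Contains π p123
    · exact Or.inl (forward_hard π hsimple hinv hav h123)
    · exact Or.inr h123
  · rintro (⟨h7, hpi⟩ | h123) hcon
    · subst h7
      rw [hpi] at hcon
      obtain ⟨w, x, y, z, q1, q2, q3, q4, q5, q6⟩ := quad_of_contains2341 hcon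
      revert q1 q2 q3 q4 q5 q6
      revert w x y z
      decide
    · exact h123 (contains123_of_contains2341 hcon)
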